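/- Let G be a finite p-separable group, for a given prime p, and let q be a prime. If |x^G| is not divisible by q for every {p,q}'-element x ∈ G, then G is {p,q}-separable. -/

import Mathlib

open Pointwise

/-- A natural number `n` is a `π`-number if every prime dividing `n` lies in `π`. -/
def IsPiNumber (π : Set ℕ) (n : ℕ) : Prop := ∀ q : ℕ, q.Prime → q ∣ n → q ∈ π

/-- The conjugacy class of an element `x` of a group `G`. -/
def conjClass (G : Type*) [Group G] (x : G) : Set G := {y : G | IsConj x y}

/-- A group `G` is `π`-separable if it has a normal series each of whose factors is
either a `π`-group or a `π'`-group. -/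
def IsPiSeparable (π : Set ℕ) (G : Type*) [Group G] : Prop :=
  ∃ (n : ℕ) (H : Fin (n + 1) → Subgroup G), Monotone H ∧ H 0 = ⊥ ∧ H (Fin.last n) = ⊤ ∧
    ∀ i : Fin n, ((H i.castSucc).subgroupOf (H i.succ)).Normal ∧
      (IsPiNumber π (Nat.card (↥(H i.succ) ⧸ (H i.castSucc).subgroupOf (H i.succ))) ∨
       IsPiNumber {q | q ∉ π} (Nat.card (↥(H i.succ) ⧸ (H i.castSucc).subgroupOf (H i.succ))))

/-- The set of conjugacy classes of non-central `p`-regular elements of `G`: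
these are the vertices of the common divisor graph `Γ_p(G)`. -/
def pRegClasses (p : ℕ) (G : Type*) [Group G] : Set (Set G) :=
  {C | ∃ x : G, x ∉ Subgroup.center G ∧ ¬ p ∣ orderOf x ∧ C = conjClass G x}

/-- The common divisor graph `Γ_p(G)`: vertices are the conjugacy classes of non-central
`p`-regular elements, two distinct classes being adjacent iff their sizes are not coprime. -/
def pRegGraph (p : ℕ) (G : Type*) [Group G] : SimpleGraph ↥(pRegClasses p G) where
  Adj A B := A ≠ B ∧ 1 < Nat.gcd (Nat.card ↥A.1) (Nat.card ↥B.1)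
  symm := by
    constructor
    rintro A B ⟨h1, h2⟩
    exact ⟨h1.symm, by rwa [Nat.gcd_comm]⟩
  loopless := by constructor; rintro A ⟨h1, -⟩; exact h1 rfl

/-- The vertex of `Γ_p(G)` corresponding to a non-central `p`-regular element. -/
def vtx {p : ℕ} {G : Type*} [Group G] {x : G}
    (h1 : x ∉ Subgroup.center G) (h2 : ¬ p ∣ orderOf x) : ↥(pRegClasses p G) :=
  ⟨conjClass G x, x, h1, h2, rfl⟩

/-- `H` is a Frobenius complement of the group `K`: it is a proper nontrivial subgroup
intersecting each of its conjugates trivially.  (`K` is then a Frobenius group.) -/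
def IsFrobeniusCompl {K : Type*} [Group K] (H : Subgroup K) : Prop :=
  H ≠ ⊥ ∧ H ≠ ⊤ ∧ ∀ g : K, g ∉ H → H ⊓ H.map (MulAut.conj g).toMonoidHom = ⊥

/-- The Frobenius kernel of a Frobenius group `K` with complement `H`: the identity together
with the elements lying in no conjugate of `H`. -/
def frobKernel {K : Type*} [Group K] (H : Subgroup K) : Set K :=
  {x : K | x = 1 ∨ ∀ g : K, x ∉ H.map (MulAut.conj g).toMonoidHom}

/-- `L` is quasi-Frobenius with abelian kernel and complements: `L / Z(L)` is a Frobenius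
group, and the preimages in `L` of the Frobenius kernel and of a Frobenius complement of
`L / Z(L)` are abelian. -/
def IsQuasiFrobeniusAbelian (L : Type*) [Group L] : Prop :=
  ∃ H : Subgroup (L ⧸ Subgroup.center L), IsFrobeniusCompl H ∧
    (∀ a ∈ (QuotientGroup.mk ⁻¹' (H : Set (L ⧸ Subgroup.center L)) : Set L),
      ∀ b ∈ (QuotientGroup.mk ⁻¹' (H : Set (L ⧸ Subgroup.center L)) : Set L), a * b = b * a) ∧
    (∀ a ∈ (QuotientGroup.mk ⁻¹' frobKernel H : Set L),
      ∀ b ∈ (QuotientGroup.mk ⁻¹' frobKernel H : Set L), a * b = b * a)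

/-- The complements of a quasi-Frobenius group `L`: the preimages in `L` of the Frobenius
complements of `L / Z(L)`. -/
def quasiFrobComplements (L : Type*) [Group L] : Set (Set L) :=
  {C | ∃ H : Subgroup (L ⧸ Subgroup.center L), IsFrobeniusCompl H ∧
        C = (QuotientGroup.mk ⁻¹' (H : Set (L ⧸ Subgroup.center L)) : Set L)}

/-- `H` is a Hall `π`-subgroup of `G`: its order is a `π`-number and its index a `π'`-number. -/
def IsHall (π : Set ℕ) {G : Type*} [Group G] (H : Subgroup G) : Prop :=
  IsPiNumber π (Nat.card ↥H) ∧ IsPiNumber {q | q ∉ π} H.index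

/-- A `p`-complement of `G` is a Hall `p'`-subgroup. -/
def IsPComplement (p : ℕ) {G : Type*} [Group G] (H : Subgroup G) : Prop :=
  IsHall {q | q ≠ p} H

/-- `G` is `p`-nilpotent if it has a normal `p`-complement. -/
def IsPNilpotent (p : ℕ) (G : Type*) [Group G] : Prop :=
  ∃ N : Subgroup G, N.Normal ∧ IsPComplement p N

/-- `O_π(G)`, the largest normal `π`-subgroup of `G` (the subgroup generated by all
normal `π`-subgroups of `G`). -/
def piCore (π : Set ℕ) (G : Type*) [Group G] : Subgroup G :=
  Subgroup.normalClosure {g : G | ∃ N : Subgroup G, N.Normal ∧ IsPiNumber π (Nat.card ↥N) ∧ g ∈ N}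

instance piCore_normal (π : Set ℕ) (G : Type*) [Group G] : (piCore π G).Normal :=
  Subgroup.normalClosure_normal

instance piCore_comap_normal {G H : Type*} [Group G] [Group H] (f : G →* H) (π : Set ℕ) :
    ((piCore π H).comap f).Normal := (piCore_normal π H).comap f

section Aux
open Subgroup
variable {G : Type*} [Group G]

lemma card_conjClass (x : G) :
    Nat.card ↥(conjClass G x) = (Subgroup.centralizer {x}).index := by
  have h1 : conjClass G x = MulAction.orbit (ConjAct G) x := by
    ext y; rw [ConjAct.mem_orbit_conjAct, isConj_comm]; rfl
  rw [h1, Nat.card_coe_set_eq, ← MulAction.index_stabilizer,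
      Subgroup.centralizer_eq_comap_stabilizer]
  exact (Subgroup.index_comap_of_surjective _ (MulEquiv.surjective _)).symm

structure IsDecomp (q : ℕ) {G : Type*} [Group G] (x u v : G) : Prop where
  mul_eq : u * v = x
  comm : Commute u v
  hu : ∃ k, orderOf u ∣ q ^ k
  hv : ¬ q ∣ orderOf v

lemma exists_decomp [Finite G] {q : ℕ} (hq : q.Prime) (x : G) :
    ∃ u v : G, IsDecomp q x u v ∧ u ∈ zpowers x ∧ v ∈ zpowers x := by
  have hn : orderOf x ≠ 0 := (orderOf_pos x).ne'
  set n := orderOf x with hndef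
  set s := n.factorization q with hs
  set A := q ^ s with hA
  set B := ordCompl[q] n with hB
  have hAB : A * B = n := Nat.ordProj_mul_ordCompl_eq_self n q
  have hqB : ¬ q ∣ B := Nat.not_dvd_ordCompl hq hn
  have hco : Nat.Coprime A B := Nat.Coprime.pow_left s (Nat.coprime_ordCompl hq hn)
  have : IsCoprime (A : ℤ) (B : ℤ) := by rwa [Nat.isCoprime_iff_coprime]
  obtain ⟨α, β, h1⟩ := this
  refine ⟨x ^ (β * B), x ^ (α * A), ⟨?_, Commute.zpow_zpow_self x _ _, ⟨s, ?_⟩, ?_⟩,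
    zpow_mem (mem_zpowers x) _, zpow_mem (mem_zpowers x) _⟩
  · rw [← zpow_add]
    have h2 : β * (B:ℤ) + α * (A:ℤ) = 1 := by linarith
    rw [h2, zpow_one]
  · rw [orderOf_dvd_iff_pow_eq_one, ← zpow_natCast, ← zpow_mul, ← hA]
    have : β * (B : ℤ) * (A : ℤ) = β * (n : ℤ) := by
      push_cast [← hAB]; ring
    rw [this, mul_comm β (n:ℤ), zpow_mul, zpow_natCast, pow_orderOf_eq_one, one_zpow]
  · intro hdvd
    apply hqB
    refine hdvd.trans ?_
    rw [orderOf_dvd_iff_pow_eq_one, ← zpow_natCast, ← zpow_mul]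
    have : α * (A : ℤ) * (B : ℤ) = α * (n : ℤ) := by push_cast [← hAB]; ring
    rw [this, mul_comm α (n:ℤ), zpow_mul, zpow_natCast, pow_orderOf_eq_one, one_zpow]

lemma decomp_eq {q : ℕ} (hq : q.Prime) {x u v u' v' : G}
    (d : IsDecomp q x u v) (huz : u ∈ zpowers x) (hvz : v ∈ zpowers x)
    (d' : IsDecomp q x u' v') : u' = u ∧ v' = v := by
  have hux : Commute u' x := by
    rw [← d'.mul_eq]; exact (Commute.refl u').mul_right d'.comm
  have hvx : Commute v' x := by
    rw [← d'.mul_eq]; exact (d'.comm.symm).mul_right (Commute.refl v')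
  obtain ⟨k, hk⟩ := huz
  obtain ⟨l, hl⟩ := hvz
  have hu'u : Commute u' u := hk ▸ hux.zpow_right k
  have hu'v : Commute u' v := hl ▸ hux.zpow_right l
  have hv'u : Commute v' u := hk ▸ hvx.zpow_right k
  have hv'v : Commute v' v := hl ▸ hvx.zpow_right l
  have key : u'⁻¹ * u = v' * v⁻¹ := by
    have h0 : u' * v' = u * v := d'.mul_eq.trans d.mul_eq.symm
    have := congrArg (fun z => u'⁻¹ * z * v⁻¹) h0
    simpa [mul_assoc] using this.symm
  obtain ⟨k1, hk1⟩ := d.hu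
  obtain ⟨k2, hk2⟩ := d'.hu
  have hwq : orderOf (u'⁻¹ * u) ∣ q ^ (k2 + k1) := by
    refine (Commute.orderOf_mul_dvd_lcm (hu'u.inv_left)).trans ?_
    rw [orderOf_inv]
    exact Nat.lcm_dvd (hk2.trans (pow_dvd_pow q (Nat.le_add_right _ _)))
      (hk1.trans (pow_dvd_pow q (Nat.le_add_left _ _)))
  have hwq' : ¬ q ∣ orderOf (u'⁻¹ * u) := by
    rw [key]
    intro hdvd
    have : orderOf (v' * v⁻¹) ∣ Nat.lcm (orderOf v') (orderOf v⁻¹) :=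
      Commute.orderOf_mul_dvd_lcm (hv'v.inv_right)
    have hql : q ∣ Nat.lcm (orderOf v') (orderOf v⁻¹) := hdvd.trans this
    have := (Nat.Prime.dvd_mul hq).mp (hql.trans (Nat.lcm_dvd_mul _ _))
    rw [orderOf_inv] at this
    exact this.elim d'.hv d.hv
  have hco : Nat.Coprime (orderOf (u'⁻¹ * u)) (q ^ (k2 + k1)) :=
    Nat.Coprime.pow_right _ (Nat.coprime_comm.mp ((Nat.Prime.coprime_iff_not_dvd hq).mpr hwq'))
  have h1 : orderOf (u'⁻¹ * u) = 1 :=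
    Nat.eq_one_of_dvd_coprimes hco dvd_rfl hwq
  rw [orderOf_eq_one_iff] at h1
  have hu'equ : u' = u := by
    have := h1
    rw [inv_mul_eq_one] at this
    exact this
  refine ⟨hu'equ, ?_⟩
  have := d'.mul_eq.trans d.mul_eq.symm
  rw [hu'equ] at this
  exact mul_left_cancel this
end Aux

section Crux
open Subgroup Finset
variable {K : Type*} [Group K] [Fintype K] {q : ℕ} [Fact q.Prime]

lemma qElt_of_mem_sylow {S : Sylow q K} {u : K} (hu : u ∈ S) :
    ∃ k, orderOf u ∣ q ^ k := by
  obtain ⟨k, hk⟩ := IsPGroup.iff_card.mp S.isPGroup'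
  exact ⟨k, hk ▸ (Subgroup.orderOf_mk u hu ▸ orderOf_dvd_natCard (⟨u, hu⟩ : (S : Subgroup K)))⟩

lemma sylow_subset_of_dvd (C : Subgroup K)
    (hC : q ^ (Nat.card K).factorization q ∣ Nat.card C) {u : K} (hu : u ∈ C)
    (huq : ∃ k, orderOf u ∣ q ^ k) :
    ∃ S : Sylow q K, (S : Set K) ⊆ C ∧ u ∈ S := by
  obtain ⟨k, hk⟩ := huq
  obtain ⟨j, hj⟩ := (Nat.dvd_prime_pow Fact.out).mp hk
  have hzp : IsPGroup q (zpowers (⟨u, hu⟩ : C)) := by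
    rw [IsPGroup.iff_card, Nat.card_zpowers, Subgroup.orderOf_mk u hu]
    exact ⟨j, hj.2⟩
  obtain ⟨T, hT⟩ := hzp.exists_le_sylow
  have hTcard : Nat.card T = q ^ (Nat.card K).factorization q := by
    rw [T.card_eq_multiplicity]
    congr 1
    have h1 : (Nat.card C).factorization q ≤ (Nat.card K).factorization q := by
      refine (Nat.Prime.pow_dvd_iff_le_factorization Fact.out Nat.card_pos.ne').mp ?_
      exact (Nat.ordProj_dvd _ q).trans (Subgroup.card_subgroup_dvd_card C)
    have h2 : (Nat.card K).factorization q ≤ (Nat.card C).factorization q :=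
      (Nat.Prime.pow_dvd_iff_le_factorization Fact.out Nat.card_pos.ne').mp hC
    omega
  have hmapcard : Nat.card ((T : Subgroup C).map C.subtype) =
      q ^ (Nat.card K).factorization q := by
    rw [← hTcard]
    exact (Nat.card_congr (Subgroup.equivMapOfInjective _ _ C.subtype_injective).toEquiv).symm
  refine ⟨Sylow.ofCard _ hmapcard, ?_, ?_⟩
  · intro x hx
    exact Subgroup.map_subtype_le _ hx
  · exact ⟨⟨u, hu⟩, hT (mem_zpowers _), rfl⟩

lemma centralizer_mem_normalizer {S : Subgroup K} {w : K}
    (hw : w ∈ Subgroup.centralizer (S : Set K)) : w ∈ Subgroup.normalizer (S : Set K) := by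
  rw [Subgroup.mem_normalizer_iff]
  intro h
  constructor
  · intro hh
    have h1 := Subgroup.mem_centralizer_iff.mp hw h hh
    have h2 : w * h * w⁻¹ = h := by
      rw [show w * h = h * w from h1.symm]; group
    rw [h2]; exact hh
  · intro hh
    have h1 := Subgroup.mem_centralizer_iff.mp hw _ hh
    have h3 : w * h = w * (w * h * w⁻¹) := by
      rw [← h1]; group
    have h4 := mul_left_cancel h3
    rw [h4]; exact hh

lemma mem_sylow_of_qelt_centralizing {S : Sylow q K} {u : K}
    (hu : u ∈ Subgroup.centralizer (S : Set K)) (huq : ∃ k, orderOf u ∣ q ^ k) :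
    u ∈ S := by
  obtain ⟨k, hk⟩ := huq
  obtain ⟨j, hj⟩ := (Nat.dvd_prime_pow Fact.out).mp hk
  have hzp : IsPGroup q (zpowers u) := by
    rw [IsPGroup.iff_card, Nat.card_zpowers]
    exact ⟨j, hj.2⟩
  have hle : zpowers u ≤ Subgroup.normalizer ((S : Subgroup K) : Set K) :=
    Subgroup.zpowers_le.mpr (centralizer_mem_normalizer hu)
  have hsup : IsPGroup q ↥((zpowers u) ⊔ (S : Subgroup K)) :=
    IsPGroup.to_sup_of_normal_right' hzp S.isPGroup' hle
  have heq := S.3 hsup le_sup_right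
  have hm : u ∈ zpowers u ⊔ (S : Subgroup K) := Subgroup.mem_sup_left (mem_zpowers u)
  rwa [heq] at hm

lemma exists_qcomplement (S : Sylow q K) :
    ∃ W : Subgroup K, (W : Set K) ⊆ Subgroup.centralizer (S : Set K) ∧
      ¬ q ∣ Nat.card W ∧
      ∀ v : K, v ∈ Subgroup.centralizer (S : Set K) → ¬ q ∣ orderOf v → v ∈ W := by
  set C : Subgroup K := Subgroup.centralizer (S : Set K) with hC
  obtain ⟨T₀⟩ : Nonempty (Sylow q C) := inferInstance
  have hcent : Subgroup.centralizer ((T₀ : Subgroup C) : Set C) = ⊤ := by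
    rw [eq_top_iff]
    intro g _
    rw [Subgroup.mem_centralizer_iff]
    intro t ht
    have htS : (t : K) ∈ S := mem_sylow_of_qelt_centralizing t.2 (by
      obtain ⟨k, hk⟩ := IsPGroup.iff_card.mp T₀.isPGroup'
      refine ⟨k, ?_⟩
      rw [Subgroup.orderOf_coe, ← Subgroup.orderOf_mk t ht, ← hk]
      exact orderOf_dvd_natCard _)
    have := Subgroup.mem_centralizer_iff.mp g.2 (t : K) htS
    exact Subtype.ext this
  have hP : Subgroup.normalizer ((T₀ : Subgroup C) : Set C) ≤ Subgroup.centralizer ((T₀ : Subgroup C) : Set C) := by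
    rw [hcent]; exact le_top
  refine ⟨(MonoidHom.ker (MonoidHom.transferSylow T₀ hP)).map C.subtype, ?_, ?_, ?_⟩
  · intro x hx
    obtain ⟨y, _, rfl⟩ := hx
    exact y.2
  · have hcard : Nat.card ((MonoidHom.ker (MonoidHom.transferSylow T₀ hP)).map C.subtype) =
        Nat.card (MonoidHom.ker (MonoidHom.transferSylow T₀ hP)) :=
      (Nat.card_congr (Subgroup.equivMapOfInjective _ _ C.subtype_injective).toEquiv).symm
    rw [hcard]
    exact MonoidHom.not_dvd_card_ker_transferSylow T₀ hP
  · intro v hv hvq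
    have hker := MonoidHom.ker_transferSylow_isComplement' T₀ hP
    set N := MonoidHom.ker (MonoidHom.transferSylow T₀ hP) with hN
    have hidx : N.index = Nat.card (T₀ : Subgroup C) := by
      have h5 := hker.card_mul
      have h6 := N.index_mul_card
      have hpos : 0 < Nat.card N := Nat.card_pos
      refine Nat.eq_of_mul_eq_mul_right hpos ?_
      rw [mul_comm (Nat.card (T₀ : Subgroup C)) (Nat.card N)]
      rw [h6, ← h5]
    have hvC : (⟨v, hv⟩ : C) ∈ N := by
      have h1 : orderOf (QuotientGroup.mk' N ⟨v, hv⟩) ∣ orderOf (⟨v, hv⟩ : C) :=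
        orderOf_map_dvd _ _
      have h2 : orderOf (QuotientGroup.mk' N ⟨v, hv⟩) ∣ N.index := by
        exact orderOf_dvd_natCard _
      rw [hidx] at h2
      obtain ⟨k, hk⟩ := IsPGroup.iff_card.mp T₀.isPGroup'
      rw [hk] at h2
      have h3 : ¬ q ∣ orderOf (⟨v, hv⟩ : C) := by
        rwa [Subgroup.orderOf_mk]
      have h4 : orderOf (QuotientGroup.mk' N ⟨v, hv⟩) = 1 := by
        refine Nat.eq_one_of_dvd_coprimes (Nat.Coprime.pow_right k
          (Nat.coprime_comm.mp ((Nat.Prime.coprime_iff_not_dvd Fact.out).mpr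
            (fun hdvd => h3 (hdvd.trans h1))))) dvd_rfl h2
      rw [orderOf_eq_one_iff] at h4
      rwa [← QuotientGroup.eq_one_iff]
    exact ⟨⟨v, hv⟩, hvC, rfl⟩

end Crux



open Subgroup

lemma crux {K : Type*} [Group K] [Finite K] {q : ℕ} (hq : q.Prime)
    (h : ∀ x : K, ¬ q ∣ orderOf x → ¬ q ∣ Nat.card ↥(conjClass K x)) :
    ∃ Q : Subgroup K, Q.Normal ∧ (∀ r : ℕ, r.Prime → r ∣ Nat.card Q → r = q) ∧
      ¬ q ∣ Nat.card (K ⧸ Q) := by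
  classical
  cases nonempty_fintype K
  have hfq : Fact q.Prime := ⟨hq⟩
  by_cases hqK : q ∣ Nat.card K
  case neg =>
    refine ⟨⊥, inferInstance, ?_, ?_⟩
    · intro r hr hrd
      rw [Subgroup.card_bot] at hrd
      exact absurd (Nat.eq_one_of_dvd_one hrd) hr.ne_one
    · have h0 : Nat.card (K ⧸ (⊥ : Subgroup K)) = (⊥ : Subgroup K).index := rfl
      rw [h0, Subgroup.index_bot]
      exact hqK
  case pos =>
  obtain ⟨Q₀⟩ : Nonempty (Sylow q K) := inferInstance
  set a := q ^ (Nat.card K).factorization q with ha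
  have hcardS : ∀ S : Sylow q K, Nat.card (S : Subgroup K) = a := fun S => S.card_eq_multiplicity
  have ha0 : 0 < a := pow_pos hq.pos _
  have ha1 : 1 < a := by
    have h1 : 1 ≤ (Nat.card K).factorization q :=
      (Nat.Prime.pow_dvd_iff_le_factorization hq Nat.card_pos.ne').mp (by simpa using hqK)
    calc 1 < q := hq.one_lt
    _ = q ^ 1 := (pow_one q).symm
    _ ≤ a := Nat.pow_le_pow_right hq.pos h1
  choose uf vf hd huz hvz using fun x : K => exists_decomp hq x
  set Ω : Finset K := Finset.univ.filter (fun v => ¬ q ∣ orderOf v) with hΩ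
  set qE : Finset K := Finset.univ.filter (fun u => ∃ k, orderOf u ∣ q ^ k) with hqE
  set Cf : K → Finset K := fun v => Finset.univ.filter (fun c => Commute c v) with hCf
  set term : K → ℕ := fun v => (qE ∩ Cf v).card with hterm
  -- E1 : fiberwise count
  have E1 : Nat.card K = ∑ v ∈ Ω, term v := by
    rw [Nat.card_eq_fintype_card, ← Finset.card_univ]
    rw [Finset.card_eq_sum_card_fiberwise (f := vf) (t := Ω) (fun x _ => by
      simp only [hΩ, Finset.mem_coe, Finset.mem_filter, Finset.mem_univ, true_and]; exact (hd x).hv)]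
    refine Finset.sum_congr rfl (fun v hv => ?_)
    rw [hΩ, Finset.mem_filter] at hv
    refine Finset.card_bij (fun x _ => x * v⁻¹) ?_ ?_ ?_
    · intro x hx
      rw [Finset.mem_filter] at hx
      have hufx : x * v⁻¹ = uf x := by
        have h5 := (hd x).mul_eq
        rw [hx.2] at h5
        conv_lhs => rw [← h5]
        exact mul_inv_cancel_right _ _
      show x * v⁻¹ ∈ qE ∩ Cf v
      rw [Finset.mem_inter, hufx]
      constructor
      · rw [hqE]
        simp only [Finset.mem_filter, Finset.mem_univ, true_and]
        exact (hd x).hu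
      · simp only [hCf, Finset.mem_filter, Finset.mem_univ, true_and]
        exact hx.2 ▸ (hd x).comm
    · intro x _ y _ hxy
      exact mul_right_cancel hxy
    · intro u hu
      rw [Finset.mem_inter, hqE, hCf] at hu
      simp only [Finset.mem_filter, Finset.mem_univ, true_and] at hu
      have dec : IsDecomp q (u * v) u v := ⟨rfl, hu.2, hu.1, hv.2⟩
      refine ⟨u * v, ?_, by group⟩
      rw [Finset.mem_filter]
      exact ⟨Finset.mem_univ _, (decomp_eq hq (hd (u*v)) (huz _) (hvz _) dec).2.symm⟩
  -- centralizers of q'-elements have full q-part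
  have hcen : ∀ v ∈ Ω, a ∣ Nat.card (Subgroup.centralizer {v}) := by
    intro v hv
    rw [hΩ, Finset.mem_filter] at hv
    have h1 := h v hv.2
    rw [card_conjClass] at h1
    have h2 : (Subgroup.centralizer {v}).index * Nat.card (Subgroup.centralizer {v})
        = Nat.card K := Subgroup.index_mul_card _
    have h3 : a ∣ (Subgroup.centralizer {v}).index * Nat.card (Subgroup.centralizer {v}) := by
      rw [h2]; exact Nat.ordProj_dvd _ q
    exact (Nat.Coprime.pow_left _ ((hq.coprime_iff_not_dvd).mpr h1)).dvd_of_dvd_mul_left h3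
  have hSFcard : ∀ S : Sylow q K, ((S : Subgroup K) : Set K).toFinset.card = a := by
    intro S
    rw [Set.toFinset_card, ← Nat.card_eq_fintype_card]
    exact hcardS S
  -- E2 : lower bound on each term
  have E2 : ∀ v ∈ Ω, a ≤ term v := by
    intro v hv
    obtain ⟨S, hS1, -⟩ := sylow_subset_of_dvd (Subgroup.centralizer {v}) (hcen v hv)
      (one_mem _) ⟨0, by simp⟩
    have hsub : ((S : Subgroup K) : Set K).toFinset ⊆ qE ∩ Cf v := by
      intro x hx
      rw [Set.mem_toFinset] at hx
      rw [Finset.mem_inter]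
      constructor
      · rw [hqE]; simp only [Finset.mem_filter, Finset.mem_univ, true_and]
        exact qElt_of_mem_sylow hx
      · simp only [hCf, Finset.mem_filter, Finset.mem_univ, true_and]
        exact Subgroup.mem_centralizer_singleton_iff.mp (hS1 hx)
    calc a = ((S : Subgroup K) : Set K).toFinset.card := (hSFcard S).symm
    _ ≤ term v := Finset.card_le_card hsub
  -- E3 : upper bound on each term
  set Sv : K → Finset (Sylow q K) :=
    fun v => Finset.univ.filter (fun S => (S : Set K) ⊆ Subgroup.centralizer {v}) with hSvdef
  have E3 : ∀ v ∈ Ω, term v ≤ 1 + (Sv v).card * (a - 1) := by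
    intro v hv
    have hsub : qE ∩ Cf v ⊆ insert (1:K)
        ((Sv v).biUnion (fun S => ((S : Subgroup K) : Set K).toFinset.erase 1)) := by
      intro u hu
      rw [Finset.mem_inter] at hu
      by_cases hu1 : u = 1
      · exact Finset.mem_insert.mpr (Or.inl hu1)
      refine Finset.mem_insert.mpr (Or.inr ?_)
      have huC : u ∈ Subgroup.centralizer {v} := by
        rw [Subgroup.mem_centralizer_singleton_iff]
        have h4 := hu.2
        simp only [hCf, Finset.mem_filter, Finset.mem_univ, true_and] at h4
        exact h4
      have huq : ∃ k, orderOf u ∣ q ^ k := by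
        have h4 := hu.1
        rw [hqE] at h4
        simpa using h4
      obtain ⟨S, hS1, hS2⟩ := sylow_subset_of_dvd _ (hcen v hv) huC huq
      rw [Finset.mem_biUnion]
      refine ⟨S, ?_, Finset.mem_erase.mpr ⟨hu1, Set.mem_toFinset.mpr hS2⟩⟩
      simp only [hSvdef, Finset.mem_filter, Finset.mem_univ, true_and]
      exact hS1
    calc term v ≤ _ := Finset.card_le_card hsub
    _ ≤ ((Sv v).biUnion (fun S => ((S : Subgroup K) : Set K).toFinset.erase 1)).card + 1 :=
        Finset.card_insert_le _ _
    _ ≤ (∑ S ∈ Sv v, (((S : Subgroup K) : Set K).toFinset.erase 1).card) + 1 := by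
        gcongr
        exact Finset.card_biUnion_le
    _ = (∑ S ∈ Sv v, (a - 1)) + 1 := by
        congr 1
        refine Finset.sum_congr rfl (fun S _ => ?_)
        rw [Finset.card_erase_of_mem (Set.mem_toFinset.mpr (one_mem _)), hSFcard S]
    _ = (Sv v).card * (a - 1) + 1 := by rw [Finset.sum_const, smul_eq_mul]
    _ = 1 + (Sv v).card * (a - 1) := by ring
  -- E4 : global bound on the number of (class, Sylow) incidences
  have E4 : a * (∑ v ∈ Ω, (Sv v).card) ≤ Nat.card K := by
    have hswap : ∑ v ∈ Ω, (Sv v).card =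
        ∑ S : Sylow q K, (Ω.filter (fun v => (S : Set K) ⊆ Subgroup.centralizer {v})).card := by
      simp only [Finset.card_filter, hSvdef]
      rw [Finset.sum_comm]
    -- per-Sylow bound
    have hper : ∀ S : Sylow q K,
        a * (Ω.filter (fun v => (S : Set K) ⊆ Subgroup.centralizer {v})).card ≤
          Nat.card (Subgroup.normalizer (S : Set K)) := by
      intro S
      obtain ⟨W, hW1, hW2, hW3⟩ := exists_qcomplement S
      have hfilt : (Ω.filter (fun v => (S : Set K) ⊆ Subgroup.centralizer {v})) ⊆
          (W : Set K).toFinset := by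
        intro v hv
        rw [Finset.mem_filter, hΩ, Finset.mem_filter] at hv
        rw [Set.mem_toFinset]
        refine hW3 v ?_ hv.1.2
        rw [Subgroup.mem_centralizer_iff]
        intro y hy
        exact Subgroup.mem_centralizer_singleton_iff.mp (hv.2 hy)
      have hWcard : (Ω.filter (fun v => (S : Set K) ⊆ Subgroup.centralizer {v})).card ≤
          Nat.card W := by
        calc (Ω.filter (fun v => (S : Set K) ⊆ Subgroup.centralizer {v})).card
            ≤ (W : Set K).toFinset.card := Finset.card_le_card hfilt
        _ = Nat.card W := by rw [Set.toFinset_card, ← Nat.card_eq_fintype_card]; rfl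
      have hinj : Function.Injective (fun p : ↥(S : Subgroup K) × ↥W =>
          (⟨(p.1 : K) * (p.2 : K), mul_mem (Subgroup.le_normalizer p.1.2)
            (centralizer_mem_normalizer (hW1 p.2.2))⟩ : Subgroup.normalizer (S : Set K))) := by
        rintro ⟨s, w⟩ ⟨s', w'⟩ hsw
        simp only [Subtype.mk_eq_mk] at hsw
        have key : (s' : K)⁻¹ * s = (w' : K) * (w : K)⁻¹ := by
          have h5 := congrArg (fun z => (s' : K)⁻¹ * z * (w : K)⁻¹) hsw
          simpa [mul_assoc] using h5
        have hz1 : (s' : K)⁻¹ * s ∈ (S : Subgroup K) := mul_mem (inv_mem s'.2) s.2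
        have hz2 : (s' : K)⁻¹ * s ∈ W := key ▸ mul_mem w'.2 (inv_mem w.2)
        have ho1 : orderOf ((s' : K)⁻¹ * s) ∣ a := by
          rw [← hcardS S, ← Subgroup.orderOf_mk _ hz1]
          exact orderOf_dvd_natCard _
        have ho2 : orderOf ((s' : K)⁻¹ * s) ∣ Nat.card W := by
          rw [← Subgroup.orderOf_mk _ hz2]
          exact orderOf_dvd_natCard _
        have hco : Nat.Coprime a (Nat.card W) :=
          Nat.Coprime.pow_left _ ((hq.coprime_iff_not_dvd).mpr hW2)
        have hz : orderOf ((s' : K)⁻¹ * s) = 1 := Nat.eq_one_of_dvd_coprimes hco ho1 ho2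
        rw [orderOf_eq_one_iff, inv_mul_eq_one] at hz
        have hw : (w' : K) = w := by
          have h6 : (1 : K) = (w' : K) * (w : K)⁻¹ := by rw [← key, hz.symm]; group
          have h7 := congrArg (fun z => z * (w : K)) h6
          simpa using h7.symm
        have : s = s' := Subtype.ext hz.symm
        have : w = w' := Subtype.ext hw.symm
        simp_all
      calc a * (Ω.filter (fun v => (S : Set K) ⊆ Subgroup.centralizer {v})).card
          ≤ a * Nat.card W := Nat.mul_le_mul_left a hWcard
      _ = Nat.card (↥(S : Subgroup K) × ↥W) := by rw [Nat.card_prod, hcardS S]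
      _ ≤ Nat.card (Subgroup.normalizer (S : Set K)) := Nat.card_le_card_of_injective _ hinj
    -- sum over all Sylows
    have hnormcard : ∀ S : Sylow q K,
        Nat.card (Sylow q K) * Nat.card (Subgroup.normalizer (S : Set K)) = Nat.card K := by
      intro S
      rw [Sylow.card_eq_index_normalizer S]
      exact Subgroup.index_mul_card _
    have hnpos : 0 < Nat.card (Sylow q K) := Nat.card_pos
    rw [hswap, Finset.mul_sum]
    have hle : ∑ S : Sylow q K,
        a * (Ω.filter (fun v => (S : Set K) ⊆ Subgroup.centralizer {v})).card ≤
        ∑ S : Sylow q K, Nat.card (Subgroup.normalizer (S : Set K)) :=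
      Finset.sum_le_sum (fun S _ => hper S)
    refine hle.trans ?_
    refine Nat.le_of_mul_le_mul_left ?_ hnpos
    rw [Finset.mul_sum]
    refine le_of_eq ?_
    calc ∑ S : Sylow q K, Nat.card (Sylow q K) * Nat.card (Subgroup.normalizer (S : Set K))
        = ∑ _S : Sylow q K, Nat.card K := Finset.sum_congr rfl (fun S _ => hnormcard S)
    _ = Nat.card (Sylow q K) * Nat.card K := by
        rw [Finset.sum_const, smul_eq_mul, Finset.card_univ]
        rw [Nat.card_eq_fintype_card (α := Sylow q K)]
  -- conclude : t * a = card K and term 1 = a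
  have h1Ω : (1 : K) ∈ Ω := by
    rw [hΩ]
    simp only [Finset.mem_filter, Finset.mem_univ, true_and, orderOf_one]
    exact fun hdvd => hq.ne_one (Nat.dvd_one.mp hdvd)
  have hta : Ω.card * a ≤ Nat.card K := by
    rw [E1]
    calc Ω.card * a = ∑ _v ∈ Ω, a := by rw [Finset.sum_const, smul_eq_mul, mul_comm]
    _ ≤ ∑ v ∈ Ω, term v := Finset.sum_le_sum E2
  have hat : Nat.card K ≤ Ω.card * a := by
    have hup : Nat.card K ≤ Ω.card + (a - 1) * (∑ v ∈ Ω, (Sv v).card) := by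
      rw [E1]
      calc ∑ v ∈ Ω, term v ≤ ∑ v ∈ Ω, (1 + (Sv v).card * (a - 1)) := Finset.sum_le_sum E3
      _ = Ω.card + (a - 1) * (∑ v ∈ Ω, (Sv v).card) := by
          rw [Finset.sum_add_distrib, Finset.sum_const, smul_eq_mul, mul_one, Finset.mul_sum]
          congr 1
          exact Finset.sum_congr rfl (fun v _ => mul_comm _ _)
    have h8 : a * Nat.card K ≤ a * Ω.card + (a - 1) * Nat.card K := by
      calc a * Nat.card K ≤ a * (Ω.card + (a - 1) * (∑ v ∈ Ω, (Sv v).card)) :=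
            Nat.mul_le_mul_left a hup
      _ = a * Ω.card + (a - 1) * (a * (∑ v ∈ Ω, (Sv v).card)) := by ring
      _ ≤ a * Ω.card + (a - 1) * Nat.card K :=
            Nat.add_le_add_left (Nat.mul_le_mul_left _ E4) _
    have h9 : a * Nat.card K = Nat.card K + (a - 1) * Nat.card K := by
      have h10 : a = 1 + (a - 1) := by omega
      nth_rewrite 1 [h10]
      ring
    rw [h9] at h8
    have h11 : Nat.card K ≤ a * Ω.card := Nat.le_of_add_le_add_right h8
    rw [mul_comm] at h11
    exact h11
  have hcardeq : Nat.card K = Ω.card * a := le_antisymm hat hta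
  -- term 1 = a
  have hterm1 : term (1 : K) = a := by
    by_contra hne
    have hlt : a < term 1 := lt_of_le_of_ne (E2 1 h1Ω) (fun e => hne e.symm)
    have hslt : ∑ _v ∈ Ω, a < ∑ v ∈ Ω, term v :=
      Finset.sum_lt_sum (fun i hi => E2 i hi) ⟨1, h1Ω, hlt⟩
    rw [← E1, Finset.sum_const, smul_eq_mul] at hslt
    rw [hcardeq] at hslt
    exact lt_irrefl _ hslt
  have hCf1 : Cf 1 = Finset.univ := by
    ext c
    simp only [hCf, Finset.mem_filter, Finset.mem_univ, true_and, iff_true]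
    exact Commute.one_right c
  have hqEcard : qE.card = a := by
    have h12 : (qE ∩ Cf 1).card = a := hterm1
    rwa [hCf1, Finset.inter_univ] at h12
  have hqEeq : ((Q₀ : Subgroup K) : Set K).toFinset = qE := by
    refine Finset.eq_of_subset_of_card_le ?_ ?_
    · intro x hx
      rw [Set.mem_toFinset] at hx
      rw [hqE]
      simp only [Finset.mem_filter, Finset.mem_univ, true_and]
      exact qElt_of_mem_sylow hx
    · rw [hqEcard, hSFcard]
  have hnormal : (Q₀ : Subgroup K).Normal := by
    constructor
    intro x hx g
    have hxe : g * x * g⁻¹ ∈ qE := by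
      rw [hqE]
      simp only [Finset.mem_filter, Finset.mem_univ, true_and]
      obtain ⟨k, hk⟩ := qElt_of_mem_sylow hx
      refine ⟨k, ?_⟩
      have h13 : orderOf (g * x * g⁻¹) = orderOf x := by
        rw [show g * x * g⁻¹ = (MulAut.conj g) x from rfl]
        exact orderOf_injective (MulAut.conj g).toMonoidHom (MulEquiv.injective _) x
      exact h13 ▸ hk
    rw [← hqEeq, Set.mem_toFinset] at hxe
    exact hxe
  refine ⟨Q₀, hnormal, ?_, ?_⟩
  · intro r hr hrd
    rw [hcardS Q₀] at hrd
    exact (Nat.prime_dvd_prime_iff_eq hr hq).mp (hr.dvd_of_dvd_pow hrd)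
  · exact Q₀.not_dvd_index

def ClassHyp (p q : ℕ) (G : Type*) [Group G] : Prop :=
  ∀ x : G, ¬ p ∣ orderOf x → ¬ q ∣ orderOf x → ¬ q ∣ Nat.card ↥(conjClass G x)

variable {p q : ℕ}

lemma ClassHyp.of_mulEquiv {G H : Type*} [Group G] [Group H] (e : G ≃* H)
    (h : ClassHyp p q G) : ClassHyp p q H := by
  intro y hyp hyq
  have horder : orderOf (e.symm y) = orderOf y :=
    orderOf_injective e.symm.toMonoidHom e.symm.injective y
  have himg : conjClass H y = e '' conjClass G (e.symm y) := by
    ext z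
    constructor
    · intro hz
      refine ⟨e.symm z, ?_, by simp⟩
      exact e.symm.toMonoidHom.map_isConj hz
    · rintro ⟨w, hw, rfl⟩
      have hw' : IsConj (e.symm y) w := hw
      have h6 := e.toMonoidHom.map_isConj hw'
      have h7 : IsConj y (e w) := by simpa using h6
      exact h7
  have hcard : Nat.card ↥(conjClass H y) = Nat.card ↥(conjClass G (e.symm y)) := by
    rw [himg]
    exact Nat.card_image_of_injective e.injective _
  rw [hcard]
  exact h (e.symm y) (horder ▸ hyp) (horder ▸ hyq)

lemma relindex_dvd_index_of_normal' {G : Type*} [Group G] (H N : Subgroup G) [hN : N.Normal] :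
    H.relIndex N ∣ H.index := by
  have key : H.relIndex N = H.relIndex (H ⊔ N) := by
    have hequiv : (N ⧸ H.subgroupOf N) ≃ (↥(H ⊔ N) ⧸ H.subgroupOf (H ⊔ N)) := by
      refine Equiv.ofBijective (Quotient.map' (fun n => ⟨n.1, Subgroup.mem_sup_right n.2⟩) ?_) ⟨?_, ?_⟩
      · intro n₁ n₂ hrel
        rw [QuotientGroup.leftRel_apply] at hrel ⊢
        exact hrel
      · intro c₁ c₂
        induction c₁ using Quotient.inductionOn' with | h n₁ => ?_
        induction c₂ using Quotient.inductionOn' with | h n₂ => ?_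
        intro heq
        rw [Quotient.map'_mk'', Quotient.map'_mk'', Quotient.eq'',
          QuotientGroup.leftRel_apply] at heq
        apply Quotient.sound'
        rw [QuotientGroup.leftRel_apply]
        exact heq
      · intro c
        induction c using Quotient.inductionOn' with | h m => ?_
        have hm : (m : G) ∈ ((N : Set G) * (H : Set G)) := by
          rw [← Subgroup.normal_mul, sup_comm N H]
          exact m.2
        obtain ⟨n, hn, hh, hhH, hprod⟩ := Set.mem_mul.mp hm
        refine ⟨Quotient.mk'' ⟨n, hn⟩, ?_⟩
        rw [Quotient.map'_mk'']
        apply Quotient.sound'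
        rw [QuotientGroup.leftRel_apply]
        show (⟨n, Subgroup.mem_sup_right hn⟩ : ↥(H ⊔ N))⁻¹ * m ∈ H.subgroupOf (H ⊔ N)
        rw [Subgroup.mem_subgroupOf]
        show (n⁻¹ * (m : G)) ∈ H
        rw [← hprod]
        simpa [← mul_assoc] using hhH
    have h2 : H.relIndex N = Nat.card (N ⧸ H.subgroupOf N) := rfl
    have h3 : H.relIndex (H ⊔ N) =
        Nat.card (↥(H ⊔ N) ⧸ H.subgroupOf (H ⊔ N)) := rfl
    rw [h2, h3, Nat.card_congr hequiv]
  rw [key]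
  exact relIndex_dvd_index_of_le le_sup_left

lemma ClassHyp.of_normal {G : Type*} [Group G] {N : Subgroup G} (hN : N.Normal)
    (h : ClassHyp p q G) : ClassHyp p q ↥N := by
  intro x hxp hxq
  have h1 := h (x : G) (by rwa [Subgroup.orderOf_coe]) (by rwa [Subgroup.orderOf_coe])
  rw [card_conjClass] at h1 ⊢
  intro hdvd
  apply h1
  have heq : (Subgroup.centralizer {x} : Subgroup ↥N) =
      (Subgroup.centralizer {(x : G)}).subgroupOf N := by
    ext c
    rw [Subgroup.mem_subgroupOf, Subgroup.mem_centralizer_singleton_iff,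
      Subgroup.mem_centralizer_singleton_iff]
    constructor
    · intro hc
      exact congrArg Subtype.val hc
    · intro hc
      exact Subtype.ext hc
  rw [heq] at hdvd
  have h2 : ((Subgroup.centralizer {(x : G)}).subgroupOf N).index =
      (Subgroup.centralizer {(x : G)}).relIndex N := rfl
  rw [h2] at hdvd
  exact hdvd.trans (relindex_dvd_index_of_normal' _ N)

lemma ClassHyp.of_quotient {G : Type*} [Group G] [Finite G] {N : Subgroup G} [hN : N.Normal]
    (h : ClassHyp p q G) (hp : p.Prime) (hq : q.Prime) : ClassHyp p q (G ⧸ N) := by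
  intro xb hxp hxq
  obtain ⟨y, rfl⟩ := QuotientGroup.mk'_surjective N xb
  set n := orderOf y with hndef
  have hn0 : n ≠ 0 := (orderOf_pos y).ne'
  set m' := ordCompl[q] (ordCompl[p] n) with hm'
  set A := p ^ (n.factorization p) * q ^ ((ordCompl[p] n).factorization q) with hA
  have hcne : ordCompl[p] n ≠ 0 := (Nat.ordCompl_pos p hn0).ne'
  have hAm' : A * m' = n := by
    rw [hA, hm', mul_assoc, Nat.ordProj_mul_ordCompl_eq_self (ordCompl[p] n) q,
      Nat.ordProj_mul_ordCompl_eq_self n p]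
  have hpm' : ¬ p ∣ m' := by
    intro hdvd
    exact Nat.not_dvd_ordCompl hp hn0 (hdvd.trans (Nat.ordCompl_dvd (ordCompl[p] n) q))
  have hqm' : ¬ q ∣ m' := Nat.not_dvd_ordCompl hq hcne
  set d := orderOf (QuotientGroup.mk' N y) with hd
  have hdn : d ∣ n := orderOf_map_dvd _ y
  have hdp : ¬ p ∣ d := hxp
  have hdq : ¬ q ∣ d := hxq
  have hcoAd : Nat.Coprime A d := by
    refine Nat.Coprime.mul ?_ ?_
    · exact Nat.Coprime.pow_left _ ((hp.coprime_iff_not_dvd).mpr hdp)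
    · exact Nat.Coprime.pow_left _ ((hq.coprime_iff_not_dvd).mpr hdq)
  have : IsCoprime (A : ℤ) (d : ℤ) := by rwa [Nat.isCoprime_iff_coprime]
  obtain ⟨α, β, hαβ⟩ := this
  set x := y ^ (α * (A : ℤ)) with hx
  have hmkx : QuotientGroup.mk' N x = QuotientGroup.mk' N y := by
    rw [hx, map_zpow]
    have h8 : (QuotientGroup.mk' N y) ^ (α * (A : ℤ)) =
        (QuotientGroup.mk' N y) ^ (α * (A : ℤ) + β * (d : ℤ) - β * (d : ℤ)) := by ring_nf
    rw [h8, hαβ]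
    have h9 : ((QuotientGroup.mk' N y) ^ (d : ℤ)) = 1 := by
      have h9' := pow_orderOf_eq_one (QuotientGroup.mk' N y)
      rw [← hd] at h9'
      exact_mod_cast h9'
    rw [zpow_sub, zpow_one, mul_comm β (d : ℤ), zpow_mul, h9, one_zpow]
    group
  have hxm' : x ^ m' = 1 := by
    rw [hx, ← zpow_natCast, ← zpow_mul]
    have h10 : α * (A : ℤ) * (m' : ℤ) = α * (n : ℤ) := by
      push_cast [← hAm']
      ring
    rw [h10, mul_comm α (n : ℤ), zpow_mul, zpow_natCast, hndef, pow_orderOf_eq_one, one_zpow]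
  have hordx : orderOf x ∣ m' := orderOf_dvd_of_pow_eq_one hxm'
  have hxp' : ¬ p ∣ orderOf x := fun h' => hpm' (h'.trans hordx)
  have hxq' : ¬ q ∣ orderOf x := fun h' => hqm' (h'.trans hordx)
  have h11 := h x hxp' hxq'
  rw [card_conjClass] at h11 ⊢
  intro hdvd
  apply h11
  have hle : Subgroup.centralizer {x} ≤
      (Subgroup.centralizer {QuotientGroup.mk' N y}).comap (QuotientGroup.mk' N) := by
    intro c hc
    rw [Subgroup.mem_comap, Subgroup.mem_centralizer_singleton_iff]
    rw [Subgroup.mem_centralizer_singleton_iff] at hc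
    rw [← hmkx, ← map_mul, ← map_mul, hc]
  have h12 : ((Subgroup.centralizer {QuotientGroup.mk' N y}).comap
      (QuotientGroup.mk' N)).index = (Subgroup.centralizer {QuotientGroup.mk' N y}).index :=
    Subgroup.index_comap_of_surjective _ (QuotientGroup.mk'_surjective N)
  calc q ∣ (Subgroup.centralizer {QuotientGroup.mk' N y}).index := hdvd
  _ = ((Subgroup.centralizer {QuotientGroup.mk' N y}).comap (QuotientGroup.mk' N)).index :=
      h12.symm
  _ ∣ (Subgroup.centralizer {x}).index := Subgroup.index_dvd_of_le hle

theorem stmt15 {G : Type*} [Group G] [Fintype G] {p q : ℕ} (hp : p.Prime) (hq : q.Prime)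
    (hsep : IsPiSeparable {p} G)
    (h : ∀ x : G, ¬ p ∣ orderOf x → ¬ q ∣ orderOf x → ¬ q ∣ Nat.card ↥(conjClass G x)) :
    IsPiSeparable {p, q} G := by
  classical
  obtain ⟨n, H, hmono, hbot, htop, hstep⟩ := hsep
  have hhyp : ClassHyp p q G := h
  -- hypothesis at every level of the series
  have hlevel : ∀ j : Fin (n + 1), ClassHyp p q ↥(H j) := by
    intro j
    induction j using Fin.reverseInduction with
    | last =>
      have h1 : ClassHyp p q ↥(⊤ : Subgroup G) :=
        ClassHyp.of_mulEquiv (Subgroup.topEquiv (G := G)).symm hhyp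
      rw [htop]
      exact h1
    | cast i ih =>
      have hnorm : ((H i.castSucc).subgroupOf (H i.succ)).Normal := (hstep i).1
      have h2 : ClassHyp p q ↥((H i.castSucc).subgroupOf (H i.succ)) :=
        ClassHyp.of_normal hnorm ih
      exact ClassHyp.of_mulEquiv
        (Subgroup.subgroupOfEquivOfLe (hmono (Fin.castSucc_le_succ i))) h2
  -- refinement data for each step
  have hM : ∀ i : Fin n, ∃ M : Subgroup G,
      H i.castSucc ≤ M ∧ M ≤ H i.succ ∧
      ((H i.castSucc).subgroupOf M).Normal ∧
      (IsPiNumber {p, q} (Nat.card (↥M ⧸ (H i.castSucc).subgroupOf M)) ∨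
        IsPiNumber {r | r ∉ ({p, q} : Set ℕ)} (Nat.card (↥M ⧸ (H i.castSucc).subgroupOf M))) ∧
      (M.subgroupOf (H i.succ)).Normal ∧
      (IsPiNumber {p, q} (Nat.card (↥(H i.succ) ⧸ M.subgroupOf (H i.succ))) ∨
        IsPiNumber {r | r ∉ ({p, q} : Set ℕ)}
          (Nat.card (↥(H i.succ) ⧸ M.subgroupOf (H i.succ)))) := by
    intro i
    haveI hnorm : ((H i.castSucc).subgroupOf (H i.succ)).Normal := (hstep i).1
    rcases (hstep i).2 with hfac | hfac
    · -- p-group factor : take M = H i.castSucc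
      refine ⟨H i.castSucc, le_rfl, hmono (Fin.castSucc_le_succ i), ?_, ?_, hnorm, ?_⟩
      · rw [Subgroup.subgroupOf_self]
        infer_instance
      · left
        intro r hr hrd
        rw [Subgroup.subgroupOf_self] at hrd
        have h3 : Nat.card (↥(H i.castSucc) ⧸ (⊤ : Subgroup ↥(H i.castSucc))) =
            (⊤ : Subgroup ↥(H i.castSucc)).index := rfl
        rw [h3, Subgroup.index_top] at hrd
        exact absurd (Nat.dvd_one.mp hrd) hr.ne_one
      · left
        intro r hr hrd
        have h4 := hfac r hr hrd
        rw [Set.mem_singleton_iff] at h4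
        rw [h4]
        exact Set.mem_insert p {q}
    · -- p'-group factor : use the crux
      set G₁ := ↥(H i.succ) with hG₁
      set N₁ := (H i.castSucc).subgroupOf (H i.succ) with hN₁
      set F := G₁ ⧸ N₁ with hF
      have hypF : ClassHyp p q F := ClassHyp.of_quotient (hlevel i.succ) hp hq
      have hpd : ∀ x : F, ¬ p ∣ orderOf x := by
        intro x hdvd
        have h5 : orderOf x ∣ Nat.card F := orderOf_dvd_natCard x
        have h6 := hfac p hp (hdvd.trans h5)
        simp at h6
      obtain ⟨Qb, hQbN, hQbcard, hQbquot⟩ := crux hq (fun x hxq => hypF x (hpd x) hxq)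
      set M₁ := Qb.comap (QuotientGroup.mk' N₁) with hM₁
      refine ⟨M₁.map (H i.succ).subtype, ?_, Subgroup.map_subtype_le _, ?_, ?_, ?_, ?_⟩
      · -- H i.castSucc ≤ M
        intro x hx
        refine Subgroup.mem_map.mpr ⟨⟨x, hmono (Fin.castSucc_le_succ i) hx⟩, ?_, rfl⟩
        have h7 : (⟨x, hmono (Fin.castSucc_le_succ i) hx⟩ : G₁) ∈ N₁ := hx
        have h8 : (QuotientGroup.mk' N₁) (⟨x, hmono (Fin.castSucc_le_succ i) hx⟩ : G₁) = 1 :=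
          (QuotientGroup.eq_one_iff _).mpr h7
        rw [hM₁, Subgroup.mem_comap, h8]
        exact one_mem Qb
      · -- factor1 normality
        have hMsub : (M₁.map (H i.succ).subtype).subgroupOf (H i.succ) = M₁ :=
          Subgroup.comap_map_eq_self_of_injective (H i.succ).subtype_injective M₁
        set ψ : ↥(M₁.map (H i.succ).subtype) →* F :=
          (QuotientGroup.mk' N₁).comp (Subgroup.inclusion (Subgroup.map_subtype_le M₁)) with hψ
        have heker : (H i.castSucc).subgroupOf (M₁.map (H i.succ).subtype) = ψ.ker := by
          ext m
          rw [Subgroup.mem_subgroupOf, MonoidHom.mem_ker, hψ, MonoidHom.comp_apply,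
            QuotientGroup.mk'_apply, QuotientGroup.eq_one_iff, hN₁, Subgroup.mem_subgroupOf]
          rfl
        rw [heker]
        infer_instance
      · -- factor1 card
        have hMsub : (M₁.map (H i.succ).subtype).subgroupOf (H i.succ) = M₁ :=
          Subgroup.comap_map_eq_self_of_injective (H i.succ).subtype_injective M₁
        set ψ : ↥(M₁.map (H i.succ).subtype) →* F :=
          (QuotientGroup.mk' N₁).comp (Subgroup.inclusion (Subgroup.map_subtype_le M₁)) with hψ
        have heker : (H i.castSucc).subgroupOf (M₁.map (H i.succ).subtype) = ψ.ker := by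
          ext m
          rw [Subgroup.mem_subgroupOf, MonoidHom.mem_ker, hψ, MonoidHom.comp_apply,
            QuotientGroup.mk'_apply, QuotientGroup.eq_one_iff, hN₁, Subgroup.mem_subgroupOf]
          rfl
        have hrange : ψ.range = Qb := by
          rw [hψ, MonoidHom.range_comp, Subgroup.inclusion_range, hMsub, hM₁]
          exact Subgroup.map_comap_eq_self_of_surjective
            (QuotientGroup.mk'_surjective N₁) Qb
        have hcard1 : Nat.card (↥(M₁.map (H i.succ).subtype) ⧸
            (H i.castSucc).subgroupOf (M₁.map (H i.succ).subtype)) = Nat.card Qb := by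
          rw [heker]
          have e := QuotientGroup.quotientKerEquivRange ψ
          rw [Nat.card_congr e.toEquiv, hrange]
        left
        intro r hr hrd
        rw [hcard1] at hrd
        have h9 := hQbcard r hr hrd
        rw [h9]
        exact Set.mem_insert_iff.mpr (Or.inr rfl)
      · -- factor2 normality
        have hMsub : (M₁.map (H i.succ).subtype).subgroupOf (H i.succ) = M₁ :=
          Subgroup.comap_map_eq_self_of_injective (H i.succ).subtype_injective M₁
        rw [hMsub]
        haveI := hQbN
        exact Subgroup.Normal.comap hQbN _
      · -- factor2 card
        have hMsub : (M₁.map (H i.succ).subtype).subgroupOf (H i.succ) = M₁ :=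
          Subgroup.comap_map_eq_self_of_injective (H i.succ).subtype_injective M₁
        haveI := hQbN
        set φ₂ : G₁ →* (F ⧸ Qb) := (QuotientGroup.mk' Qb).comp (QuotientGroup.mk' N₁) with hφ₂
        have hsurj : Function.Surjective φ₂ :=
          (QuotientGroup.mk'_surjective Qb).comp (QuotientGroup.mk'_surjective N₁)
        have hker₂ : φ₂.ker = M₁ := by
          rw [hφ₂, ← MonoidHom.comap_ker, QuotientGroup.ker_mk', hM₁]
        have hcard2 : Nat.card (G₁ ⧸ (M₁.map (H i.succ).subtype).subgroupOf (H i.succ)) =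
            Nat.card (F ⧸ Qb) := by
          rw [hMsub, ← hker₂]
          exact Nat.card_congr (QuotientGroup.quotientKerEquivOfSurjective φ₂ hsurj).toEquiv
        right
        intro r hr hrd
        rw [hcard2] at hrd
        have hrq : r ≠ q := by
          intro hrq
          exact hQbquot (hrq ▸ hrd)
        have hrp : r ≠ p := by
          have hdvdF : Nat.card (F ⧸ Qb) ∣ Nat.card F := by
            rw [Subgroup.card_eq_card_quotient_mul_card_subgroup Qb]
            exact Dvd.intro _ rfl
          have h9 := hfac r hr (hrd.trans hdvdF)
          simpa using h9
        simp only [Set.mem_setOf_eq, Set.mem_insert_iff, Set.mem_singleton_iff]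
        push_neg
        exact ⟨hrp, hrq⟩
  -- assemble the refined series
  choose M hM1 hM2 hM3 hM4 hM5 hM6 using hM
  set F : ℕ → Subgroup G := fun k =>
    if hk : k ≤ 2 * n then
      (if h2 : k % 2 = 0 then H ⟨k / 2, by omega⟩ else M ⟨k / 2, by omega⟩)
    else ⊤ with hFdef
  have hFeven : ∀ k (hk : k ≤ 2 * n) (h2 : k % 2 = 0), F k = H ⟨k / 2, by omega⟩ := by
    intro k hk h2
    simp only [hFdef, dif_pos hk, dif_pos h2]
  have hFodd : ∀ k (hk : k ≤ 2 * n) (h2 : k % 2 ≠ 0), F k = M ⟨k / 2, by omega⟩ := by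
    intro k hk h2
    simp only [hFdef, dif_pos hk, dif_neg h2]
  have hFtop : ∀ k, 2 * n < k → F k = ⊤ := by
    intro k hk
    simp only [hFdef, dif_neg (by omega : ¬ k ≤ 2 * n)]
  -- single-step data
  have hstep' : ∀ k, k < 2 * n → F k ≤ F (k + 1) ∧
      ((F k).subgroupOf (F (k + 1))).Normal ∧
      (IsPiNumber {p, q} (Nat.card (↥(F (k+1)) ⧸ (F k).subgroupOf (F (k+1)))) ∨
        IsPiNumber {r | r ∉ ({p, q} : Set ℕ)}
          (Nat.card (↥(F (k+1)) ⧸ (F k).subgroupOf (F (k+1))))) := by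
    intro k hk
    by_cases h2 : k % 2 = 0
    · -- even step : H i.castSucc ≤ M i
      set i : Fin n := ⟨k / 2, by omega⟩ with hi
      have e1 : F k = H i.castSucc := by
        rw [hFeven k (by omega) h2]
        congr 1
      have e2 : F (k + 1) = M i := by
        rw [hFodd (k+1) (by omega) (by omega)]
        congr 1
        rw [hi]
        simp only [Fin.mk.injEq]
        omega
      rw [e1, e2]
      exact ⟨hM1 i, hM3 i, hM4 i⟩
    · -- odd step : M i ≤ H i.succ
      set i : Fin n := ⟨k / 2, by omega⟩ with hi
      have e1 : F k = M i := by
        rw [hFodd k (by omega) h2]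
      have e2 : F (k + 1) = H i.succ := by
        rw [hFeven (k+1) (by omega) (by omega)]
        congr 1
        rw [hi]
        simp only [Fin.succ_mk, Fin.mk.injEq]
        omega
      rw [e1, e2]
      exact ⟨hM2 i, hM5 i, hM6 i⟩
  have hFmono : Monotone F := by
    apply monotone_nat_of_le_succ
    intro k
    by_cases hk : k < 2 * n
    · exact (hstep' k hk).1
    · rw [hFtop (k+1) (by omega)]
      exact le_top
  refine ⟨2 * n, fun j => F j.val, fun j₁ j₂ hle => hFmono hle, ?_, ?_, ?_⟩
  · show F 0 = ⊥
    rw [hFeven 0 (by omega) (by omega), ← hbot]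
    exact congrArg H (Fin.ext (by simp))
  · show F (2 * n) = ⊤
    rw [hFeven (2 * n) (by omega) (by omega), ← htop]
    congr 1
    simp only [Fin.last, Fin.mk.injEq]
    omega
  · intro i
    have h10 := hstep' i.val i.isLt
    exact ⟨h10.2.1, h10.2.2⟩
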